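/- For any two positive integers p and q, the inequality |√17 − p/q| > 2/(17·q²) is satisfied. -/

import Mathlib

/-- For any two positive integers `p, q`, one has `|√17 - p/q| > 2/(17·q²)`. -/
theorem sqrt17_diophantine (p q : ℕ) (hp : 0 < p) (hq : 0 < q) :
    |Real.sqrt 17 - (p : ℝ) / (q : ℝ)| > 2 / (17 * (q : ℝ) ^ 2) := by
  have hqR : (0:ℝ) < (q:ℝ) := by exact_mod_cast hq
  have hpR : (0:ℝ) < (p:ℝ) := by exact_mod_cast hp
  have hq2 : (0:ℝ) < (q:ℝ)^2 := by positivity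
  have hs : Real.sqrt 17 ^ 2 = 17 := Real.sq_sqrt (by norm_num)
  have hs0 : 0 < Real.sqrt 17 := Real.sqrt_pos.2 (by norm_num)
  have hslt : Real.sqrt 17 < 4.13 := by nlinarith [hs, hs0]
  have h17 : Irrational (Real.sqrt 17) := by
    have hpr : Nat.Prime 17 := by norm_num
    simpa using hpr.irrational_sqrt
  set x : ℝ := (p:ℝ) / (q:ℝ) with hxdef
  have hx0 : 0 < x := div_pos hpR hqR
  have hxne : Real.sqrt 17 ≠ x := by
    intro h
    exact h17 ⟨(p:ℚ)/(q:ℚ), by push_cast [h]; rfl⟩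
  have hne : (17 * (q:ℤ)^2 - (p:ℤ)^2) ≠ 0 := by
    intro h
    have hpq : (p:ℝ)^2 = 17 * (q:ℝ)^2 := by
      have h2 : (17 * (q:ℤ)^2 : ℤ) = (p:ℤ)^2 := by linarith
      exact_mod_cast h2.symm
    have hx2 : x^2 = 17 := by
      rw [hxdef, div_pow]
      rw [hpq]
      field_simp
    have hs' : Real.sqrt 17 = x := by nlinarith [hs, hs0, hx0]
    exact hxne hs'
  have hkey : (1:ℝ) ≤ |17 * (q:ℝ)^2 - (p:ℝ)^2| := by
    have h1 : 1 ≤ |17 * (q:ℤ)^2 - (p:ℤ)^2| := Int.one_le_abs hne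
    exact_mod_cast h1
  have hA : 1 / (q:ℝ)^2 ≤ |17 - x^2| := by
    have heq : |17 - x^2| = |17 * (q:ℝ)^2 - (p:ℝ)^2| / (q:ℝ)^2 := by
      rw [← abs_of_pos hq2, ← abs_div]
      congr 1
      field_simp [hxdef]
      rw [abs_of_pos hq2, hxdef, div_pow, sub_mul, div_mul_cancel₀ _ hq2.ne']
    rw [heq]
    gcongr
  -- product identity
  have hD0 : 0 < Real.sqrt 17 + x := by linarith
  have hprod : |Real.sqrt 17 - x| * (Real.sqrt 17 + x) = |17 - x^2| := by
    rw [← abs_of_pos hD0, ← abs_mul]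
    congr 1
    nlinarith [hs]
  have hd0 : 0 < |Real.sqrt 17 - x| := abs_pos.2 (sub_ne_zero.2 hxne)
  by_cases hbig : 2/17 < |Real.sqrt 17 - x|
  · calc 2 / (17 * (q:ℝ)^2) ≤ 2/17 := by
          have hq1 : (1:ℝ) ≤ (q:ℝ) := by exact_mod_cast hq
          rw [div_le_div_iff₀ (by positivity) (by norm_num)]
          nlinarith [hq1]
      _ < _ := hbig
  · push_neg at hbig
    have hxle : x ≤ Real.sqrt 17 + 2/17 := by
      have := abs_le.1 hbig
      linarith [this.1, this.2]
    have hDlt : Real.sqrt 17 + x < 17/2 := by linarith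
    rw [gt_iff_lt, div_lt_iff₀ (by positivity)]
    have h1 : 1 ≤ |Real.sqrt 17 - x| * (Real.sqrt 17 + x) * (q:ℝ)^2 := by
      rw [hprod]
      exact (div_le_iff₀ hq2).mp hA
    have h3 : 0 < |Real.sqrt 17 - x| * (q:ℝ)^2 * (17/2 - (Real.sqrt 17 + x)) :=
      mul_pos (mul_pos hd0 hq2) (by linarith)
    nlinarith [h1, h3]
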